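/- arXiv:1509.06218 — 2 statements merged into one kernel-verified Lean document; each statement's English description precedes it below -/
import Mathlib

section
/- Assume the total mass equation Σ_{α=1}^N ∂_t h_α + Σ_{α=1}^N ∂_x(h_α u_α) = 0 and, for each α = 1,…,N, the layer momentum equation ∂_t(h_α u_α) + ∂_x( h_α u_α² + h_α p_α ) = u_{α+1/2} G_{α+1/2} − u_{α−1/2} G_{α−1/2} + p_{α+1/2} ∂_x z_{α+1/2} − p_{α−1/2} ∂_x z_{α−1/2}, where u_{α±1/2} are given smooth functions. Then each layer satisfies the energy balance ∂_t E_α + ∂_x( u_α (E_α + h_α p_α) ) = ( u_{α+1/2} u_α − u_α²/2 + p_{α+1/2} + g z_{α+1/2} ) G_{α+1/2} − ( u_{α−1/2} u_α − u_α²/2 + p_{α−1/2} + g z_{α−1/2} ) G_{α−1/2} − p_{α+1/2} ∂_t z_{α+1/2} + p_{α−1/2} ∂_t z_{α−1/2}, where E_α = h_α( u_α²/2 + g z_α ). -/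
/-- ∂/∂x of a function of (x,t). -/
noncomputable def pdx (f : ℝ → ℝ → ℝ) (x t : ℝ) : ℝ := deriv (fun x' => f x' t) x

/-- ∂/∂t of a function of (x,t). -/
noncomputable def pdt (f : ℝ → ℝ → ℝ) (x t : ℝ) : ℝ := deriv (fun t' => f x t') t

/-- Layer thickness `h_α = l_α H`. -/
noncomputable def hh (H : ℝ → ℝ → ℝ) (l : ℕ → ℝ) (α : ℕ) (x t : ℝ) : ℝ := l α * H x t

/-- Interface heights `z_{α+1/2} = z_b + Σ_{j=1}^α l_j H`. -/
noncomputable def zhalf (zb : ℝ → ℝ) (H : ℝ → ℝ → ℝ) (l : ℕ → ℝ) (α : ℕ) (x t : ℝ) : ℝ :=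
  zb x + ∑ j ∈ Finset.Icc 1 α, l j * H x t

/-- Layer midpoints `z_α = (z_{α+1/2} + z_{α−1/2})/2`. -/
noncomputable def zc (zb : ℝ → ℝ) (H : ℝ → ℝ → ℝ) (l : ℕ → ℝ) (α : ℕ) (x t : ℝ) : ℝ :=
  (zhalf zb H l α x t + zhalf zb H l (α - 1) x t) / 2

/-- Mass exchange terms `G_{α+1/2} = ∂_t Σ_{j=1}^α h_j + ∂_x Σ_{j=1}^α h_j u_j`
(index `α` denotes `α+1/2`). -/
noncomputable def Gex (H : ℝ → ℝ → ℝ) (l : ℕ → ℝ) (u : ℕ → ℝ → ℝ → ℝ) (α : ℕ) (x t : ℝ) : ℝ :=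
  deriv (fun t' => ∑ j ∈ Finset.Icc 1 α, hh H l j x t') t
    + deriv (fun x' => ∑ j ∈ Finset.Icc 1 α, hh H l j x' t * u j x' t) x

/-- Layer pressures `p_α = g(h_α/2 + Σ_{j=α+1}^N h_j)`. -/
noncomputable def player (H : ℝ → ℝ → ℝ) (l : ℕ → ℝ) (g : ℝ) (N α : ℕ) (x t : ℝ) : ℝ :=
  g * (hh H l α x t / 2 + ∑ j ∈ Finset.Icc (α + 1) N, hh H l j x t)

/-- Interface pressures `p_{α+1/2} = g Σ_{j=α+1}^N h_j` (index `α` denotes `α+1/2`). -/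
noncomputable def phalf (H : ℝ → ℝ → ℝ) (l : ℕ → ℝ) (g : ℝ) (N α : ℕ) (x t : ℝ) : ℝ :=
  g * ∑ j ∈ Finset.Icc (α + 1) N, hh H l j x t

lemma diffx' {f : ℝ → ℝ → ℝ} (hf : ContDiff ℝ (⊤ : ℕ∞) (fun q : ℝ × ℝ => f q.1 q.2))
    (x t : ℝ) : DifferentiableAt ℝ (fun x' => f x' t) x := by
  have h := DifferentiableAt.comp (f := fun x' : ℝ => (x', t)) x ((hf.differentiable (by simp)) (x, t))
    ((differentiableAt_id.prodMk (differentiableAt_const t)))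
  exact h

lemma difft' {f : ℝ → ℝ → ℝ} (hf : ContDiff ℝ (⊤ : ℕ∞) (fun q : ℝ × ℝ => f q.1 q.2))
    (x t : ℝ) : DifferentiableAt ℝ (fun t' => f x t') t := by
  have h := DifferentiableAt.comp (f := fun t' : ℝ => (x, t')) t ((hf.differentiable (by simp)) (x, t))
    (((differentiableAt_const x)).prodMk differentiableAt_id)
  exact h

/-- per-layer energy balance of the layer-averaged Euler system. -/
theorem stmt9 (N : ℕ) (hN : 1 ≤ N) (l : ℕ → ℝ)
    (hl : ∀ j ∈ Finset.Icc 1 N, 0 < l j) (hlsum : ∑ j ∈ Finset.Icc 1 N, l j = 1)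
    (g : ℝ) (hg : 0 < g)
    (zb : ℝ → ℝ) (H : ℝ → ℝ → ℝ)
    (hzb : ContDiff ℝ (⊤ : ℕ∞) zb)
    (hH : ContDiff ℝ (⊤ : ℕ∞) (fun q : ℝ × ℝ => H q.1 q.2))
    (hHpos : ∀ x t : ℝ, 0 < H x t)
    (u : ℕ → ℝ → ℝ → ℝ)
    (hu : ∀ α, ContDiff ℝ (⊤ : ℕ∞) (fun q : ℝ × ℝ => u α q.1 q.2))
    (uhalf : ℕ → ℝ → ℝ → ℝ)
    (huhalf : ∀ α, ContDiff ℝ (⊤ : ℕ∞) (fun q : ℝ × ℝ => uhalf α q.1 q.2))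
    -- total mass equation
    (htot : ∀ x t : ℝ,
      (∑ α ∈ Finset.Icc 1 N, pdt (hh H l α) x t)
        + (∑ α ∈ Finset.Icc 1 N, pdx (fun x' t' => hh H l α x' t' * u α x' t') x t) = 0)
    -- layer momentum equations
    (hmom : ∀ α ∈ Finset.Icc 1 N, ∀ x t : ℝ,
      pdt (fun x' t' => hh H l α x' t' * u α x' t') x t
        + pdx (fun x' t' => hh H l α x' t' * (u α x' t') ^ 2
            + hh H l α x' t' * player H l g N α x' t') x t
      = uhalf α x t * Gex H l u α x t - uhalf (α - 1) x t * Gex H l u (α - 1) x t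
        + phalf H l g N α x t * pdx (zhalf zb H l α) x t
        - phalf H l g N (α - 1) x t * pdx (zhalf zb H l (α - 1)) x t) :
    -- per-layer energy balance
    ∀ α ∈ Finset.Icc 1 N, ∀ x t : ℝ,
      pdt (fun x' t' => hh H l α x' t' * ((u α x' t') ^ 2 / 2 + g * zc zb H l α x' t')) x t
        + pdx (fun x' t' => u α x' t'
            * (hh H l α x' t' * ((u α x' t') ^ 2 / 2 + g * zc zb H l α x' t')
              + hh H l α x' t' * player H l g N α x' t')) x t
      = (uhalf α x t * u α x t - (u α x t) ^ 2 / 2 + phalf H l g N α x t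
            + g * zhalf zb H l α x t) * Gex H l u α x t
        - (uhalf (α - 1) x t * u α x t - (u α x t) ^ 2 / 2 + phalf H l g N (α - 1) x t
            + g * zhalf zb H l (α - 1) x t) * Gex H l u (α - 1) x t
        - phalf H l g N α x t * pdt (zhalf zb H l α) x t
        + phalf H l g N (α - 1) x t * pdt (zhalf zb H l (α - 1)) x t := by
  intro α hα x t
  rw [Finset.mem_Icc] at hα
  obtain ⟨β, rfl⟩ : ∃ β, α = β + 1 := ⟨α - 1, by omega⟩
  have hβN : β + 1 ≤ N := hα.2
  have hm := hmom (β + 1) (Finset.mem_Icc.mpr ⟨by omega, hβN⟩) x t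
  have HAt : HasDerivAt (fun t' => H x t') (deriv (fun t' => H x t') t) t :=
    (difft' hH x t).hasDerivAt
  have HAx : HasDerivAt (fun x' => H x' t) (deriv (fun x' => H x' t) x) x :=
    (diffx' hH x t).hasDerivAt
  have HBt : HasDerivAt (fun t' => u (β + 1) x t') (deriv (fun t' => u (β + 1) x t') t) t :=
    (difft' (hu (β + 1)) x t).hasDerivAt
  have HBx : HasDerivAt (fun x' => u (β + 1) x' t) (deriv (fun x' => u (β + 1) x' t) x) x :=
    (diffx' (hu (β + 1)) x t).hasDerivAt
  have Hzb : HasDerivAt zb (deriv zb x) x :=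
    ((hzb.differentiable (by simp)) x).hasDerivAt
  have hc : (∑ j ∈ Finset.Icc 1 (β + 1), l j) = (∑ j ∈ Finset.Icc 1 β, l j) + l (β + 1) :=
    Finset.sum_Icc_succ_top (by omega) l
  have hS : (∑ j ∈ Finset.Icc (β + 1) N, l j)
      = l (β + 1) + ∑ j ∈ Finset.Icc (β + 1 + 1) N, l j := by
    rw [show Finset.Icc (β + 1) N = insert (β + 1) (Finset.Icc (β + 1 + 1) N) from
      Finset.ext fun k => by simp only [Finset.mem_Icc, Finset.mem_insert]; omega]
    rw [Finset.sum_insert (by simp only [Finset.mem_Icc]; omega)]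
  -- the G-telescoping relation
  have grel : Gex H l u (β + 1) x t - Gex H l u β x t
      = l (β + 1) * deriv (fun t' => H x t') t
        + ((l (β + 1) * deriv (fun x' => H x' t) x) * u (β + 1) x t
          + (l (β + 1) * H x t) * deriv (fun x' => u (β + 1) x' t) x) := by
    have ht1 : ∀ γ : ℕ, deriv (fun t' => ∑ j ∈ Finset.Icc 1 γ, hh H l j x t') t
        = (∑ j ∈ Finset.Icc 1 γ, l j) * deriv (fun t' => H x t') t := by
      intro γ
      have efun : (fun t' => ∑ j ∈ Finset.Icc 1 γ, hh H l j x t')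
          = (fun t' => (∑ j ∈ Finset.Icc 1 γ, l j) * H x t') := by
        funext t'; simp only [hh, ← Finset.sum_mul]
      rw [efun]; exact (HAt.const_mul _).deriv
    have hx1 : ∀ γ : ℕ, deriv (fun x' => ∑ j ∈ Finset.Icc 1 γ, hh H l j x' t * u j x' t) x
        = ∑ j ∈ Finset.Icc 1 γ, ((l j * deriv (fun x' => H x' t) x) * u j x t
            + (l j * H x t) * deriv (fun x' => u j x' t) x) := by
      intro γ
      have efun : (fun x' => ∑ j ∈ Finset.Icc 1 γ, hh H l j x' t * u j x' t)
          = fun x' => ∑ j ∈ Finset.Icc 1 γ, (l j * H x' t) * u j x' t := by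
        funext x'; simp only [hh]
      rw [efun]
      have h := (HasDerivAt.sum (u := Finset.Icc 1 γ) fun j _ =>
        (HAx.const_mul (l j)).mul ((diffx' (hu j) x t).hasDerivAt)).deriv
      simp only [Finset.sum_fn, Pi.mul_def] at h; exact h
    unfold Gex
    rw [ht1, ht1, hx1, hx1, hc,
      Finset.sum_Icc_succ_top (show 1 ≤ β + 1 by omega)]
    ring
  simp only [Nat.add_sub_cancel] at hm ⊢
  simp only [pdt, pdx] at hm ⊢
  -- E1 : time derivative of the layer energy
  have efun1 : (fun t' => hh H l (β + 1) x t' * ((u (β + 1) x t') ^ 2 / 2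
        + g * zc zb H l (β + 1) x t'))
      = fun t' => (l (β + 1) * H x t') * ((u (β + 1) x t' * u (β + 1) x t') / 2
        + g * (((zb x + (∑ j ∈ Finset.Icc 1 (β + 1), l j) * H x t')
          + (zb x + (∑ j ∈ Finset.Icc 1 β, l j) * H x t')) / 2)) := by
    funext t'
    simp only [hh, zc, zhalf, Nat.add_sub_cancel, ← Finset.sum_mul]
    ring
  have E1 := ((HAt.const_mul (l (β + 1))).mul (((HBt.mul HBt).div_const 2).add
      (((((HAt.const_mul (∑ j ∈ Finset.Icc 1 (β + 1), l j)).const_add (zb x)).add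
        ((HAt.const_mul (∑ j ∈ Finset.Icc 1 β, l j)).const_add (zb x))).div_const 2).const_mul
          g))).deriv
  simp only [Pi.mul_def, Pi.add_def] at E1
  rw [← efun1] at E1
  -- E2 : space derivative of the energy flux
  have efun2 : (fun x' => u (β + 1) x' t * (hh H l (β + 1) x' t * ((u (β + 1) x' t) ^ 2 / 2
        + g * zc zb H l (β + 1) x' t) + hh H l (β + 1) x' t * player H l g N (β + 1) x' t))
      = fun x' => u (β + 1) x' t * ((l (β + 1) * H x' t) * ((u (β + 1) x' t * u (β + 1) x' t) / 2
        + g * (((zb x' + (∑ j ∈ Finset.Icc 1 (β + 1), l j) * H x' t)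
          + (zb x' + (∑ j ∈ Finset.Icc 1 β, l j) * H x' t)) / 2))
        + (l (β + 1) * H x' t) * (g * ((l (β + 1) * H x' t) / 2
          + (∑ j ∈ Finset.Icc (β + 1 + 1) N, l j) * H x' t))) := by
    funext x'
    simp only [hh, zc, zhalf, player, Nat.add_sub_cancel, ← Finset.sum_mul]
    ring
  have E2 := (HBx.mul (((HAx.const_mul (l (β + 1))).mul (((HBx.mul HBx).div_const 2).add
      ((((Hzb.add (HAx.const_mul (∑ j ∈ Finset.Icc 1 (β + 1), l j))).add
        (Hzb.add (HAx.const_mul (∑ j ∈ Finset.Icc 1 β, l j)))).div_const 2).const_mul g))).add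
      ((HAx.const_mul (l (β + 1))).mul ((((HAx.const_mul (l (β + 1))).div_const 2).add
        (HAx.const_mul (∑ j ∈ Finset.Icc (β + 1 + 1) N, l j))).const_mul g)))).deriv
  simp only [Pi.mul_def, Pi.add_def] at E2
  rw [← efun2] at E2
  -- E3 : time derivative of the momentum
  have efun3 : (fun t' => hh H l (β + 1) x t' * u (β + 1) x t')
      = fun t' => (l (β + 1) * H x t') * u (β + 1) x t' := by
    funext t'; simp only [hh]
  have E3 := ((HAt.const_mul (l (β + 1))).mul HBt).deriv
  simp only [Pi.mul_def, Pi.add_def] at E3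
  rw [← efun3] at E3
  -- E4 : space derivative of the momentum flux
  have efun4 : (fun x' => hh H l (β + 1) x' t * u (β + 1) x' t ^ 2
        + hh H l (β + 1) x' t * player H l g N (β + 1) x' t)
      = fun x' => (l (β + 1) * H x' t) * (u (β + 1) x' t * u (β + 1) x' t)
        + (l (β + 1) * H x' t) * (g * ((l (β + 1) * H x' t) / 2
          + (∑ j ∈ Finset.Icc (β + 1 + 1) N, l j) * H x' t)) := by
    funext x'
    simp only [hh, player, ← Finset.sum_mul]
    ring
  have E4 := (((HAx.const_mul (l (β + 1))).mul (HBx.mul HBx)).add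
      ((HAx.const_mul (l (β + 1))).mul ((((HAx.const_mul (l (β + 1))).div_const 2).add
        (HAx.const_mul (∑ j ∈ Finset.Icc (β + 1 + 1) N, l j))).const_mul g))).deriv
  simp only [Pi.mul_def, Pi.add_def] at E4
  rw [← efun4] at E4
  -- E5/E6 : derivatives of the interface heights
  have efun5 : ∀ γ : ℕ, (fun x' => zhalf zb H l γ x' t)
      = fun x' => zb x' + (∑ j ∈ Finset.Icc 1 γ, l j) * H x' t := by
    intro γ; funext x'; simp only [zhalf, ← Finset.sum_mul]
  have E5a := (Hzb.add (HAx.const_mul (∑ j ∈ Finset.Icc 1 (β + 1), l j))).deriv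
  simp only [Pi.add_def] at E5a
  rw [← efun5 (β + 1)] at E5a
  have E5b := (Hzb.add (HAx.const_mul (∑ j ∈ Finset.Icc 1 β, l j))).deriv
  simp only [Pi.add_def] at E5b
  rw [← efun5 β] at E5b
  have efun6 : ∀ γ : ℕ, (fun t' => zhalf zb H l γ x t')
      = fun t' => zb x + (∑ j ∈ Finset.Icc 1 γ, l j) * H x t' := by
    intro γ; funext t'; simp only [zhalf, ← Finset.sum_mul]
  have E6a := ((HAt.const_mul (∑ j ∈ Finset.Icc 1 (β + 1), l j)).const_add (zb x)).deriv
  rw [← efun6 (β + 1)] at E6a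
  have E6b := ((HAt.const_mul (∑ j ∈ Finset.Icc 1 β, l j)).const_add (zb x)).deriv
  rw [← efun6 β] at E6b
  rw [E1, E2, E6a, E6b] at *
  rw [E3, E4, E5a, E5b] at hm
  simp only [phalf, zhalf, hh, ← Finset.sum_mul] at hm ⊢
  rw [hc] at hm ⊢
  rw [hS] at hm ⊢
  linear_combination (u (β + 1) x t) * hm
    - (-(u (β + 1) x t * u (β + 1) x t) / 2 + g * zb x
      + g * ((∑ j ∈ Finset.Icc 1 β, l j) + l (β + 1) / 2) * H x t
      + g * H x t * (l (β + 1) / 2 + ∑ j ∈ Finset.Icc (β + 1 + 1) N, l j)) * grel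
end

section
/- Assume the layer-averaged Euler system: the total mass equation Σ_{α=1}^N ∂_t h_α + Σ_{α=1}^N ∂_x(h_α u_α) = 0 and, for each α = 1,…,N, ∂_t(h_α u_α) + ∂_x( h_α u_α² + h_α p_α ) = u_{α+1/2} G_{α+1/2} − u_{α−1/2} G_{α−1/2} + p_{α+1/2} ∂_x z_{α+1/2} − p_{α−1/2} ∂_x z_{α−1/2}, with the upwind interface velocities u_{α+1/2} = u_α if G_{α+1/2} ≤ 0 and u_{α+1/2} = u_{α+1} if G_{α+1/2} > 0 (for 1 ≤ α ≤ N−1). Then the total energy satisfies ∂/∂t Σ_{α=1}^N E_α + ∂/∂x Σ_{α=1}^N u_α( E_α + h_α p_α ) = − (1/2) Σ_{α=1}^{N−1} ( u_{α+1} − u_α )² |G_{α+1/2}|, where E_α = h_α( u_α²/2 + g z_α ). -/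
/-- Upwind interface velocities `u_{α+1/2} = u_α` if `G_{α+1/2} ≤ 0`, `u_{α+1}` else. -/
noncomputable def uup (H : ℝ → ℝ → ℝ) (l : ℕ → ℝ) (u : ℕ → ℝ → ℝ → ℝ) (α : ℕ) (x t : ℝ) : ℝ :=
  if Gex H l u α x t ≤ 0 then u α x t else u (α + 1) x t


open Finset in
private lemma stmt10_sum_shift1 (f : ℕ → ℝ) (m : ℕ) :
    ∑ α ∈ Finset.Icc 1 (1+m), f α = ∑ β ∈ Finset.Icc 0 m, f (1+β) := by
  have h := Finset.map_add_left_Icc 0 m 1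
  rw [show (1:ℕ)+0 = 1 from rfl] at h
  rw [← h, Finset.sum_map]
  rfl

private lemma stmt10_abel (N : ℕ) (hN : 1 ≤ N) (G a b : ℕ → ℝ)
    (hG0 : G 0 = 0) (hGN : G N = 0) :
    ∑ α ∈ Finset.Icc 1 N, (a α * G α - b α * G (α-1))
      = ∑ α ∈ Finset.Icc 1 (N-1), (a α - b (α+1)) * G α := by
  obtain ⟨k, rfl⟩ : ∃ k, N = k + 1 := ⟨N - 1, by omega⟩
  rw [Finset.sum_sub_distrib]
  have h1 : ∑ α ∈ Finset.Icc 1 (k+1), a α * G α = ∑ α ∈ Finset.Icc 1 k, a α * G α := by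
    rw [Finset.sum_Icc_succ_top (by omega), hGN, mul_zero, add_zero]
  have h2 : ∑ α ∈ Finset.Icc 1 (k+1), b α * G (α-1)
      = ∑ β ∈ Finset.Icc 0 k, b (1+β) * G (1+β-1) := by
    rw [show k+1 = 1+k from by omega]
    exact stmt10_sum_shift1 (fun α => b α * G (α-1)) k
  have h3 : Finset.Icc 0 k = insert 0 (Finset.Icc 1 k) := by
    ext a; simp; omega
  rw [h1, h2, h3, Finset.sum_insert (by simp)]
  simp only [show ∀ β : ℕ, 1+β-1 = β from fun β => by omega, hG0, mul_zero, zero_add]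
  rw [Nat.add_sub_cancel, ← Finset.sum_sub_distrib]
  refine Finset.sum_congr rfl fun α _ => by ring_nf

private lemma stmt10_alg (N : ℕ) (hN : 1 ≤ N) (l Ls Rs U Ut Ux G v : ℕ → ℝ)
    (A At Ax B Bx g : ℝ)
    (hLs : ∀ α, Ls α = ∑ j ∈ Finset.Icc 1 α, l j)
    (hRs : ∀ α, Rs α = ∑ j ∈ Finset.Icc (α+1) N, l j)
    (hsum : ∑ j ∈ Finset.Icc 1 N, l j = 1)
    (hG0 : G 0 = 0) (hGN : G N = 0)
    (hmass : ∀ α ∈ Finset.Icc 1 N,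
      G α - G (α-1) = l α * At + l α * Ax * U α + l α * A * Ux α)
    (hv : ∀ α, v α = if G α ≤ 0 then U α else U (α+1))
    (hM : ∀ α ∈ Finset.Icc 1 N,
      l α * At * U α + l α * A * Ut α + (l α * Ax * U α ^ 2 + 2 * l α * A * U α * Ux α
        + 2 * g * l α * (l α / 2 + Rs α) * A * Ax)
      = v α * G α - v (α-1) * G (α-1)
        + g * (Rs α * A) * (Bx + Ls α * Ax) - g * (Rs (α-1) * A) * (Bx + Ls (α-1) * Ax)) :
    ∑ α ∈ Finset.Icc 1 N,
      ( (l α * (At * (U α ^ 2 / 2 + g * B + g * ((Ls α + Ls (α-1)) / 2) * A)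
          + A * (U α * Ut α + g * ((Ls α + Ls (α-1)) / 2) * At)))
        + ( Ux α * (l α * A * (U α ^ 2 / 2 + g * (B + ((Ls α + Ls (α-1)) / 2) * A))
              + l α * A * (g * ((l α / 2 + Rs α) * A)))
          + U α * ( l α * Ax * (U α ^ 2 / 2 + g * (B + ((Ls α + Ls (α-1)) / 2) * A))
              + l α * A * (U α * Ux α + g * (Bx + ((Ls α + Ls (α-1)) / 2) * Ax))
              + l α * Ax * (g * ((l α / 2 + Rs α) * A))
              + l α * A * (g * ((l α / 2 + Rs α) * Ax)) ) ) )
    = -(1/2) * ∑ α ∈ Finset.Icc 1 (N-1), (U (α+1) - U α)^2 * |G α| := by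
  have eLR : ∀ β, β ≤ N → Rs β = 1 - Ls β := by
    intro β hβ
    have h := Finset.sum_Ioc_consecutive l (Nat.zero_le β) hβ
    have i1 : Finset.Icc 1 β = Finset.Ioc 0 β := Finset.Icc_add_one_left_eq_Ioc 0 β
    have i2 : Finset.Icc (β+1) N = Finset.Ioc β N := Finset.Icc_add_one_left_eq_Ioc β N
    have i3 : Finset.Icc 1 N = Finset.Ioc 0 N := Finset.Icc_add_one_left_eq_Ioc 0 N
    rw [hRs β, hLs β, i1, i2]
    rw [i3] at hsum
    linarith
  have eLL : ∀ β : ℕ, Ls (β+1) = Ls β + l (β+1) := by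
    intro β
    rw [hLs, hLs]
    exact Finset.sum_Icc_succ_top (by omega) l
  have tele : ∀ n : ℕ, ∑ α ∈ Finset.Icc 1 n, (l α * (Ls α + Ls (α-1))) = (Ls n)^2 := by
    intro n
    induction n with
    | zero =>
        rw [show Finset.Icc 1 0 = (∅ : Finset ℕ) from Finset.Icc_eq_empty (by omega)]
        rw [hLs]
        simp
    | succ k ih =>
        rw [Finset.sum_Icc_succ_top (by omega), ih, Nat.add_sub_cancel, eLL k]
        ring
  have hLN : Ls N = 1 := by rw [hLs]; exact hsum
  have key : ∀ α ∈ Finset.Icc 1 N,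
      ( (l α * (At * (U α ^ 2 / 2 + g * B + g * ((Ls α + Ls (α-1)) / 2) * A)
          + A * (U α * Ut α + g * ((Ls α + Ls (α-1)) / 2) * At)))
        + ( Ux α * (l α * A * (U α ^ 2 / 2 + g * (B + ((Ls α + Ls (α-1)) / 2) * A))
              + l α * A * (g * ((l α / 2 + Rs α) * A)))
          + U α * ( l α * Ax * (U α ^ 2 / 2 + g * (B + ((Ls α + Ls (α-1)) / 2) * A))
              + l α * A * (U α * Ux α + g * (Bx + ((Ls α + Ls (α-1)) / 2) * Ax))
              + l α * Ax * (g * ((l α / 2 + Rs α) * A))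
              + l α * A * (g * ((l α / 2 + Rs α) * Ax)) ) ) )
      = ((U α * v α + (g * (B + A) - U α ^ 2 / 2)) * G α
          - (U α * v (α-1) + (g * (B + A) - U α ^ 2 / 2)) * G (α-1))
        + g * A * At * (l α * (Ls α + Ls (α-1) - 1)) := by
    intro α hα
    obtain ⟨hα1, hαN⟩ := Finset.mem_Icc.mp hα
    obtain ⟨β, rfl⟩ : ∃ β, α = β + 1 := ⟨α - 1, by omega⟩
    have hM' := hM (β+1) hα
    have hm' := hmass (β+1) hα
    have e1 : Rs (β+1) = 1 - Ls (β+1) := eLR (β+1) hαN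
    have e2 : Rs β = 1 - Ls β := eLR β (by omega)
    have e3 : Ls (β+1) = Ls β + l (β+1) := eLL β
    simp only [Nat.add_sub_cancel] at hM' hm' ⊢
    rw [e1] at hM' ⊢
    rw [e2] at hM'
    rw [e3] at hM' ⊢
    linear_combination (U (β+1)) * hM' - (g * (B + A) - U (β+1)^2/2) * hm'
  rw [Finset.sum_congr rfl key, Finset.sum_add_distrib]
  have h3 : ∑ α ∈ Finset.Icc 1 N, g * A * At * (l α * (Ls α + Ls (α-1) - 1)) = 0 := by
    have e : ∀ α ∈ Finset.Icc 1 N, g * A * At * (l α * (Ls α + Ls (α-1) - 1))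
        = g * A * At * (l α * (Ls α + Ls (α-1))) - g * A * At * l α := fun α _ => by ring
    rw [Finset.sum_congr rfl e, Finset.sum_sub_distrib, ← Finset.mul_sum, tele N,
      ← Finset.mul_sum, hsum, hLN]
    ring
  rw [h3, add_zero]
  rw [stmt10_abel N hN G (fun α => U α * v α + (g * (B + A) - U α ^ 2 / 2))
      (fun α => U α * v (α-1) + (g * (B + A) - U α ^ 2 / 2)) hG0 hGN]
  have last : ∀ α ∈ Finset.Icc 1 (N-1),
      ((fun α => U α * v α + (g * (B + A) - U α ^ 2 / 2)) α
        - (fun α => U α * v (α-1) + (g * (B + A) - U α ^ 2 / 2)) (α+1)) * G α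
      = -(1/2) * ((U (α+1) - U α)^2 * |G α|) := by
    intro α _
    simp only [Nat.add_sub_cancel]
    rcases le_or_gt (G α) 0 with h | h
    · rw [hv α, if_pos h, abs_of_nonpos h]; ring
    · rw [hv α, if_neg (not_le.mpr h), abs_of_pos h]; ring
  rw [Finset.sum_congr rfl last, ← Finset.mul_sum]

private lemma stmt10_slice_t {f : ℝ → ℝ → ℝ}
    (hf : ContDiff ℝ (⊤ : ℕ∞) (fun q : ℝ × ℝ => f q.1 q.2)) (x t : ℝ) :
    HasDerivAt (fun t' => f x t') (pdt f x t) t := by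
  have h : Differentiable ℝ (fun t' : ℝ => f x t') :=
    (hf.differentiable (by simp)).comp
      ((differentiable_const x).prodMk differentiable_id)
  exact (h t).hasDerivAt

private lemma stmt10_slice_x {f : ℝ → ℝ → ℝ}
    (hf : ContDiff ℝ (⊤ : ℕ∞) (fun q : ℝ × ℝ => f q.1 q.2)) (x t : ℝ) :
    HasDerivAt (fun x' => f x' t) (pdx f x t) x := by
  have h : Differentiable ℝ (fun x' : ℝ => f x' t) :=
    (hf.differentiable (by simp)).comp
      (differentiable_id.prodMk (differentiable_const t))
  exact (h x).hasDerivAt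

/-- total energy dissipation of the layer-averaged Euler system with
upwind interface velocities. -/
theorem stmt10 (N : ℕ) (hN : 1 ≤ N) (l : ℕ → ℝ)
    (hl : ∀ j ∈ Finset.Icc 1 N, 0 < l j) (hlsum : ∑ j ∈ Finset.Icc 1 N, l j = 1)
    (g : ℝ) (hg : 0 < g)
    (zb : ℝ → ℝ) (H : ℝ → ℝ → ℝ)
    (hzb : ContDiff ℝ (⊤ : ℕ∞) zb)
    (hH : ContDiff ℝ (⊤ : ℕ∞) (fun q : ℝ × ℝ => H q.1 q.2))
    (hHpos : ∀ x t : ℝ, 0 < H x t)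
    (u : ℕ → ℝ → ℝ → ℝ)
    (hu : ∀ α, ContDiff ℝ (⊤ : ℕ∞) (fun q : ℝ × ℝ => u α q.1 q.2))
    -- total mass equation
    (htot : ∀ x t : ℝ,
      (∑ α ∈ Finset.Icc 1 N, pdt (hh H l α) x t)
        + (∑ α ∈ Finset.Icc 1 N, pdx (fun x' t' => hh H l α x' t' * u α x' t') x t) = 0)
    -- layer momentum equations with upwind interface velocities
    (hmom : ∀ α ∈ Finset.Icc 1 N, ∀ x t : ℝ,
      pdt (fun x' t' => hh H l α x' t' * u α x' t') x t
        + pdx (fun x' t' => hh H l α x' t' * (u α x' t') ^ 2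
            + hh H l α x' t' * player H l g N α x' t') x t
      = uup H l u α x t * Gex H l u α x t - uup H l u (α - 1) x t * Gex H l u (α - 1) x t
        + phalf H l g N α x t * pdx (zhalf zb H l α) x t
        - phalf H l g N (α - 1) x t * pdx (zhalf zb H l (α - 1)) x t) :
    -- total energy balance
    ∀ x t : ℝ,
      deriv (fun t' => ∑ α ∈ Finset.Icc 1 N,
          hh H l α x t' * ((u α x t') ^ 2 / 2 + g * zc zb H l α x t')) t
        + deriv (fun x' => ∑ α ∈ Finset.Icc 1 N,
            u α x' t * (hh H l α x' t * ((u α x' t) ^ 2 / 2 + g * zc zb H l α x' t)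
              + hh H l α x' t * player H l g N α x' t)) x
      = -(1 / 2) * ∑ α ∈ Finset.Icc 1 (N - 1),
          (u (α + 1) x t - u α x t) ^ 2 * |Gex H l u α x t| := by
  intro x t
  have hHt : HasDerivAt (fun t' => H x t') (pdt H x t) t := stmt10_slice_t hH x t
  have hHx : HasDerivAt (fun x' => H x' t) (pdx H x t) x := stmt10_slice_x hH x t
  have hut : ∀ j, HasDerivAt (fun t' => u j x t') (pdt (u j) x t) t :=
    fun j => stmt10_slice_t (hu j) x t
  have hux : ∀ j, HasDerivAt (fun x' => u j x' t) (pdx (u j) x t) x :=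
    fun j => stmt10_slice_x (hu j) x t
  have hzbx : HasDerivAt zb (deriv zb x) x :=
    (hzb.differentiable (by simp) x).hasDerivAt
  have hGval : ∀ α : ℕ, Gex H l u α x t
      = (∑ j ∈ Finset.Icc 1 α, l j) * pdt H x t
        + ∑ j ∈ Finset.Icc 1 α,
            (l j * pdx H x t * u j x t + l j * H x t * pdx (u j) x t) := by
    intro α
    have d1 : HasDerivAt (fun t' => ∑ j ∈ Finset.Icc 1 α, hh H l j x t')
        (∑ j ∈ Finset.Icc 1 α, l j * pdt H x t) t :=
      HasDerivAt.fun_sum fun j _ => hHt.const_mul (l j)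
    have d2 : HasDerivAt (fun x' => ∑ j ∈ Finset.Icc 1 α, hh H l j x' t * u j x' t)
        (∑ j ∈ Finset.Icc 1 α,
          (l j * pdx H x t * u j x t + l j * H x t * pdx (u j) x t)) x :=
      HasDerivAt.fun_sum fun j _ => (hHx.const_mul (l j)).mul (hux j)
    unfold Gex
    rw [d1.deriv, d2.deriv, ← Finset.sum_mul]
  have hzx : ∀ β : ℕ, pdx (zhalf zb H l β) x t
      = deriv zb x + (∑ j ∈ Finset.Icc 1 β, l j) * pdx H x t := by
    intro β
    refine ((hzbx.add (HasDerivAt.fun_sum fun j (_ : j ∈ Finset.Icc 1 β) =>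
      hHx.const_mul (l j))).deriv).trans ?_
    rw [← Finset.sum_mul]
  have hpv : ∀ β : ℕ, phalf H l g N β x t
      = g * ((∑ j ∈ Finset.Icc (β+1) N, l j) * H x t) := by
    intro β
    unfold phalf hh
    rw [← Finset.sum_mul]
  have hmomt : ∀ α : ℕ, pdt (fun x' t' => hh H l α x' t' * u α x' t') x t
      = l α * pdt H x t * u α x t + l α * H x t * pdt (u α) x t := by
    intro α
    refine (((hHt.const_mul (l α)).mul (hut α)).deriv).trans ?_
    beta_reduce
    ring
  have hmomx : ∀ α : ℕ, pdx (fun x' t' => hh H l α x' t' * (u α x' t') ^ 2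
      + hh H l α x' t' * player H l g N α x' t') x t
      = l α * pdx H x t * u α x t ^ 2 + 2 * l α * H x t * u α x t * pdx (u α) x t
        + 2 * g * l α * (l α / 2 + ∑ j ∈ Finset.Icc (α+1) N, l j) * H x t * pdx H x t := by
    intro α
    refine (HasDerivAt.deriv (((hHx.const_mul (l α)).mul ((hux α).pow 2)).add
      ((hHx.const_mul (l α)).mul
        ((((hHx.const_mul (l α)).div_const 2).add
          (HasDerivAt.fun_sum fun j (_ : j ∈ Finset.Icc (α+1) N) =>
            hHx.const_mul (l j))).const_mul g)))).trans ?_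
    beta_reduce
    simp only [← Finset.sum_mul]
    norm_num
    ring
  have hG0 : Gex H l u 0 x t = 0 := by
    unfold Gex
    rw [show Finset.Icc 1 0 = (∅ : Finset ℕ) from Finset.Icc_eq_empty (by omega)]
    simp
  have hGN : Gex H l u N x t = 0 := by
    have e1 : ∀ α : ℕ, pdt (hh H l α) x t = l α * pdt H x t :=
      fun α => (hHt.const_mul (l α)).deriv
    have e2 : ∀ α : ℕ, pdx (fun x' t' => hh H l α x' t' * u α x' t') x t
        = l α * pdx H x t * u α x t + l α * H x t * pdx (u α) x t :=
      fun α => ((hHx.const_mul (l α)).mul (hux α)).deriv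
    have htv := htot x t
    rw [Finset.sum_congr rfl (fun α _ => e1 α),
      Finset.sum_congr rfl (fun α _ => e2 α)] at htv
    rw [hGval N, Finset.sum_mul]
    exact htv
  have hmassv : ∀ α ∈ Finset.Icc 1 N,
      Gex H l u α x t - Gex H l u (α-1) x t
        = l α * pdt H x t + l α * pdx H x t * u α x t + l α * H x t * pdx (u α) x t := by
    intro α hα
    obtain ⟨hα1, hαN⟩ := Finset.mem_Icc.mp hα
    obtain ⟨β, rfl⟩ : ∃ β, α = β + 1 := ⟨α - 1, by omega⟩
    rw [Nat.add_sub_cancel, hGval (β+1), hGval β,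
      Finset.sum_Icc_succ_top (show 1 ≤ β+1 by omega),
      Finset.sum_Icc_succ_top (show 1 ≤ β+1 by omega)]
    ring
  have hMomv : ∀ α ∈ Finset.Icc 1 N,
      l α * pdt H x t * u α x t + l α * H x t * pdt (u α) x t
        + (l α * pdx H x t * u α x t ^ 2 + 2 * l α * H x t * u α x t * pdx (u α) x t
          + 2 * g * l α * (l α / 2 + ∑ j ∈ Finset.Icc (α+1) N, l j) * H x t * pdx H x t)
      = uup H l u α x t * Gex H l u α x t - uup H l u (α-1) x t * Gex H l u (α-1) x t
        + g * ((∑ j ∈ Finset.Icc (α+1) N, l j) * H x t)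
            * (deriv zb x + (∑ j ∈ Finset.Icc 1 α, l j) * pdx H x t)
        - g * ((∑ j ∈ Finset.Icc (α-1+1) N, l j) * H x t)
            * (deriv zb x + (∑ j ∈ Finset.Icc 1 (α-1), l j) * pdx H x t) := by
    intro α hα
    have h := hmom α hα x t
    rw [hmomt α, hmomx α, hpv α, hpv (α-1), hzx α, hzx (α-1)] at h
    exact h
  have hT : deriv (fun t' => ∑ α ∈ Finset.Icc 1 N,
        hh H l α x t' * ((u α x t') ^ 2 / 2 + g * zc zb H l α x t')) t
      = ∑ α ∈ Finset.Icc 1 N,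
          (l α * (pdt H x t * ((u α x t) ^ 2 / 2 + g * zb x
              + g * (((∑ j ∈ Finset.Icc 1 α, l j) + (∑ j ∈ Finset.Icc 1 (α-1), l j)) / 2) * H x t)
            + H x t * (u α x t * pdt (u α) x t
              + g * (((∑ j ∈ Finset.Icc 1 α, l j) + (∑ j ∈ Finset.Icc 1 (α-1), l j)) / 2) * pdt H x t))) := by
    refine (HasDerivAt.deriv (HasDerivAt.fun_sum fun α (_ : α ∈ Finset.Icc 1 N) =>
      ((hHt.const_mul (l α)).mul
        ((((hut α).pow 2).div_const 2).add
          (((((hasDerivAt_const t (zb x)).add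
                (HasDerivAt.fun_sum fun j (_ : j ∈ Finset.Icc 1 α) => hHt.const_mul (l j))).add
              ((hasDerivAt_const t (zb x)).add
                (HasDerivAt.fun_sum fun j (_ : j ∈ Finset.Icc 1 (α-1)) => hHt.const_mul (l j)))).div_const
            2).const_mul g))))).trans ?_
    refine Finset.sum_congr rfl fun α _ => ?_
    beta_reduce
    simp only [← Finset.sum_mul]
    norm_num
    ring
  have hX : deriv (fun x' => ∑ α ∈ Finset.Icc 1 N,
        u α x' t * (hh H l α x' t * ((u α x' t) ^ 2 / 2 + g * zc zb H l α x' t)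
          + hh H l α x' t * player H l g N α x' t)) x
      = ∑ α ∈ Finset.Icc 1 N,
          (pdx (u α) x t * (l α * H x t * ((u α x t) ^ 2 / 2
              + g * (zb x + (((∑ j ∈ Finset.Icc 1 α, l j) + (∑ j ∈ Finset.Icc 1 (α-1), l j)) / 2) * H x t))
            + l α * H x t * (g * ((l α / 2 + ∑ j ∈ Finset.Icc (α+1) N, l j) * H x t)))
          + u α x t * (l α * pdx H x t * ((u α x t) ^ 2 / 2
              + g * (zb x + (((∑ j ∈ Finset.Icc 1 α, l j) + (∑ j ∈ Finset.Icc 1 (α-1), l j)) / 2) * H x t))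
            + l α * H x t * (u α x t * pdx (u α) x t
              + g * (deriv zb x + (((∑ j ∈ Finset.Icc 1 α, l j) + (∑ j ∈ Finset.Icc 1 (α-1), l j)) / 2) * pdx H x t))
            + l α * pdx H x t * (g * ((l α / 2 + ∑ j ∈ Finset.Icc (α+1) N, l j) * H x t))
            + l α * H x t * (g * ((l α / 2 + ∑ j ∈ Finset.Icc (α+1) N, l j) * pdx H x t)))) := by
    refine (HasDerivAt.deriv (HasDerivAt.fun_sum fun α (_ : α ∈ Finset.Icc 1 N) =>
      ((hux α).mul
        (((hHx.const_mul (l α)).mul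
            ((((hux α).pow 2).div_const 2).add
              ((((hzbx.add
                    (HasDerivAt.fun_sum fun j (_ : j ∈ Finset.Icc 1 α) => hHx.const_mul (l j))).add
                  (hzbx.add
                    (HasDerivAt.fun_sum fun j (_ : j ∈ Finset.Icc 1 (α-1)) => hHx.const_mul (l j)))).div_const
                2).const_mul g))).add
          ((hHx.const_mul (l α)).mul
            ((((hHx.const_mul (l α)).div_const 2).add
              (HasDerivAt.fun_sum fun j (_ : j ∈ Finset.Icc (α+1) N) =>
                hHx.const_mul (l j))).const_mul g)))))).trans ?_
    refine Finset.sum_congr rfl fun α _ => ?_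
    beta_reduce
    simp only [← Finset.sum_mul]
    norm_num
    ring
  rw [hT, hX, ← Finset.sum_add_distrib]
  exact stmt10_alg N hN l (fun β => ∑ j ∈ Finset.Icc 1 β, l j)
    (fun β => ∑ j ∈ Finset.Icc (β+1) N, l j)
    (fun j => u j x t) (fun j => pdt (u j) x t) (fun j => pdx (u j) x t)
    (fun α => Gex H l u α x t) (fun α => uup H l u α x t)
    (H x t) (pdt H x t) (pdx H x t) (zb x) (deriv zb x) g
    (fun α => rfl) (fun α => rfl) hlsum hG0 hGN hmassv (fun α => rfl) hMomv
end
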